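/- Let M be a compact metric space, φ:ℝ×M→M a continuous flow without fixed points that is separating, ε₀(φ) = inf({τ>0 : ∃x∈M with φ_τ(x)=x and φ_t(x)≠x for all t∈(0,τ)} ∪ {1}), and let ψ:ℝ×M→M be a continuous flow commuting with φ. Then there exist a constant a>0, a constant μ∈(0, ε₀(φ)/3), and a continuous function z:[−a,a]×M→[−μ,μ] such that ψ_s(x) = φ_{z(s,x)}(x) for every (s,x)∈[−a,a]×M. -/

import Mathlib

open Set Filter Topology Metric

/-- A closed additive subgroup of `ℝ × ℝ` that meets every vertical line contains a line. -/
lemma line_in_closed_subgroup (G : AddSubgroup (ℝ × ℝ))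
    (hGc : IsClosed (G : Set (ℝ × ℝ)))
    (hsurj : ∀ s : ℝ, ∃ τ : ℝ, (s, τ) ∈ G) :
    ∃ v : ℝ × ℝ, v ≠ 0 ∧ ∀ t : ℝ, t • v ∈ G := by
  classical
  choose τf hτf using hsurj
  set F : ℝ → ℝ × ℝ := fun s => (s, τf s) with hF
  have hFinj : Function.Injective F := fun a b hab => congrArg Prod.fst hab
  have hFG : Set.range F ⊆ (G : Set (ℝ × ℝ)) := by
    rintro p ⟨s, rfl⟩; exact hτf s
  have hrange_unc : ¬ (Set.range F).Countable := by
    intro h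
    have h2 := h.preimage hFinj
    rw [Set.preimage_range] at h2
    exact Cardinal.not_countable_real h2
  have hball : ∃ n : ℕ, ((Set.range F) ∩ Metric.closedBall 0 n).Infinite := by
    by_contra h
    push_neg at h
    have heq : Set.range F = ⋃ n : ℕ, (Set.range F ∩ Metric.closedBall 0 n) := by
      ext p
      simp only [Set.mem_iUnion, Set.mem_inter_iff, Metric.mem_closedBall]
      constructor
      · intro hp
        refine ⟨⌈dist p 0⌉₊, hp, Nat.le_ceil _⟩
      · rintro ⟨n, hp, -⟩; exact hp
    exact hrange_unc (heq ▸ Set.countable_iUnion fun n => (h n).countable)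
  obtain ⟨n, hinf⟩ := hball
  obtain ⟨z, hzball, hz⟩ := hinf.exists_accPt_of_subset_isCompact
    (isCompact_closedBall (0 : ℝ × ℝ) n) Set.inter_subset_right
  rw [accPt_iff_nhds] at hz
  have hseq : ∀ k : ℕ, ∃ y : ℝ × ℝ, y ∈ G ∧ y ≠ z ∧ dist y z < 1 / (k + 1) := by
    intro k
    have hU : Metric.ball z (1 / (k + 1)) ∈ 𝓝 z :=
      Metric.ball_mem_nhds z (by positivity)
    obtain ⟨y, ⟨hy1, hy2⟩, hy3⟩ := hz _ hU
    exact ⟨y, hFG hy2.1, hy3, Metric.mem_ball.mp hy1⟩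
  choose g hgG hgz hgd using hseq
  have hgtend : Filter.Tendsto g Filter.atTop (𝓝 z) := by
    rw [tendsto_iff_dist_tendsto_zero]
    apply squeeze_zero (fun k => dist_nonneg) (fun k => (hgd k).le)
    exact tendsto_one_div_add_atTop_nhds_zero_nat
  have hzG : z ∈ G := hGc.mem_of_tendsto hgtend (Filter.Eventually.of_forall hgG)
  set d : ℕ → ℝ × ℝ := fun k => g k - z with hd
  have hdG : ∀ k, d k ∈ G := fun k => sub_mem (hgG k) hzG
  have hdne : ∀ k, d k ≠ 0 := fun k => sub_ne_zero.mpr (hgz k)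
  have hdnorm : ∀ k, ‖d k‖ = dist (g k) z := fun k => by
    rw [dist_eq_norm]
  have hdtend : Filter.Tendsto (fun k => ‖d k‖) Filter.atTop (𝓝 0) := by
    simp only [hdnorm]
    exact (tendsto_iff_dist_tendsto_zero.mp hgtend)
  set u : ℕ → ℝ × ℝ := fun k => (‖d k‖)⁻¹ • d k with hu
  have hun : ∀ k, ‖u k‖ = 1 := by
    intro k
    rw [hu]
    simp only [norm_smul, norm_inv, norm_norm]
    rw [inv_mul_cancel₀ (norm_ne_zero_iff.mpr (hdne k))]
  have husphere : ∀ k, u k ∈ Metric.sphere (0 : ℝ × ℝ) 1 := by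
    intro k; simpa [Metric.mem_sphere, dist_eq_norm] using hun k
  obtain ⟨v, hvs, σ, hσ, hvt⟩ := (isCompact_sphere (0 : ℝ × ℝ) 1).tendsto_subseq husphere
  have hvne : v ≠ 0 := by
    intro h
    rw [h] at hvs
    simp at hvs
  refine ⟨v, hvne, fun t => ?_⟩
  set c : ℕ → ℝ := fun k => ‖d (σ k)‖ with hc
  have hcpos : ∀ k, 0 < c k := fun k => norm_pos_iff.mpr (hdne (σ k))
  have hctend : Filter.Tendsto c Filter.atTop (𝓝 0) :=
    hdtend.comp hσ.tendsto_atTop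
  set m : ℕ → ℤ := fun k => ⌊t / c k⌋ with hm
  have hmc : Filter.Tendsto (fun k => (m k : ℝ) * c k) Filter.atTop (𝓝 t) := by
    have hle : ∀ k, (m k : ℝ) * c k ≤ t := by
      intro k
      have := Int.floor_le (t / c k)
      calc (m k : ℝ) * c k ≤ (t / c k) * c k := by
            apply mul_le_mul_of_nonneg_right this (hcpos k).le
        _ = t := div_mul_cancel₀ t (hcpos k).ne'
    have hge : ∀ k, t - c k ≤ (m k : ℝ) * c k := by
      intro k
      have h1 : t / c k - 1 ≤ (m k : ℝ) := by
        have := Int.sub_one_lt_floor (t / c k)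
        linarith
      have := mul_le_mul_of_nonneg_right h1 (hcpos k).le
      calc t - c k = (t / c k - 1) * c k := by
            rw [sub_mul, div_mul_cancel₀ t (hcpos k).ne', one_mul]
        _ ≤ (m k : ℝ) * c k := this
    have h1 : Filter.Tendsto (fun k => t - c k) Filter.atTop (𝓝 t) := by
      simpa using (tendsto_const_nhds (x := t)).sub hctend
    exact tendsto_of_tendsto_of_tendsto_of_le_of_le h1 tendsto_const_nhds hge hle
  have hsmul : Filter.Tendsto (fun k => ((m k : ℝ) * c k) • (u (σ k)))
      Filter.atTop (𝓝 (t • v)) := hmc.smul hvt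
  have heq : ∀ k, ((m k : ℝ) * c k) • (u (σ k)) = (m k : ℤ) • d (σ k) := by
    intro k
    rw [← Int.cast_smul_eq_zsmul ℝ]
    rw [hu]
    rw [smul_smul]
    congr 1
    show (m k : ℝ) * c k * (c k)⁻¹ = (m k : ℝ)
    rw [mul_assoc, mul_inv_cancel₀ (hcpos k).ne', mul_one]
  have hmem : ∀ k, ((m k : ℝ) * c k) • (u (σ k)) ∈ (G : Set (ℝ × ℝ)) := by
    intro k
    rw [heq k]
    exact zsmul_mem (hdG (σ k)) (m k)
  exact hGc.mem_of_tendsto hsmul (Filter.Eventually.of_forall hmem)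

/-- Uniform smallness of a continuous flow near time `0` on a compact space. -/
lemma flow_uniform_small {M : Type*} [MetricSpace M] [CompactSpace M]
    (χ : ℝ → M → M) (hcont : Continuous fun p : ℝ × M => χ p.1 p.2)
    (h0 : ∀ y, χ 0 y = y) {ρ : ℝ} (hρ : 0 < ρ) :
    ∃ c > 0, ∀ (y : M) (r : ℝ), |r| ≤ c → dist (χ r y) y < ρ := by
  set U : Set (ℝ × M) := {p | dist (χ p.1 p.2) p.2 < ρ} with hU
  have hUopen : IsOpen U := by
    have hcd : Continuous fun p : ℝ × M => dist (χ p.1 p.2) p.2 :=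
      hcont.dist continuous_snd
    exact isOpen_lt hcd continuous_const
  have hsub : ({0} : Set ℝ) ×ˢ (Set.univ : Set M) ⊆ U := by
    rintro ⟨r, y⟩ ⟨hr, -⟩
    simp only [Set.mem_singleton_iff] at hr
    subst hr
    simp only [hU, Set.mem_setOf_eq, h0 y, dist_self]
    exact hρ
  obtain ⟨u, v, hu, hv, h0u, huniv, huv⟩ :=
    generalized_tube_lemma isCompact_singleton isCompact_univ hUopen hsub
  have h0mem : (0 : ℝ) ∈ u := h0u rfl
  obtain ⟨ε, hε, hball⟩ := Metric.isOpen_iff.mp hu 0 h0mem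
  refine ⟨ε / 2, by positivity, fun y r hr => ?_⟩
  have hrball : r ∈ u := by
    apply hball
    rw [Metric.mem_ball, Real.dist_eq, sub_zero]
    linarith [hr]
  have hmemU : (r, y) ∈ U := huv (Set.mem_prod.mpr ⟨hrball, huniv (Set.mem_univ y)⟩)
  exact hmemU

/-- For a separating fixed-point-free flow `φ` and a commuting flow `ψ`,
there are `a > 0`, `μ ∈ (0, ε₀(φ)/3)` and a continuous `z : [−a,a] × M → [−μ,μ]` with
`ψ_s(x) = φ_{z(s,x)}(x)`. -/
theorem stmt_10 {M : Type*} [MetricSpace M] [CompactSpace M]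
    (φ : ℝ → M → M)
    (hφcont : Continuous fun p : ℝ × M => φ p.1 p.2)
    (hφ0 : ∀ x, φ 0 x = x)
    (hφadd : ∀ t s x, φ (t + s) x = φ t (φ s x))
    (hnofix : ∀ x : M, ∃ t : ℝ, φ t x ≠ x)
    (hsep : ∃ δ > 0, ∀ x y : M, (∀ t : ℝ, dist (φ t x) (φ t y) < δ) →
      ∃ s : ℝ, φ s x = y)
    (ε₀ : ℝ)
    (hε₀ : ε₀ = sInf ({τ : ℝ | 0 < τ ∧ ∃ x : M, φ τ x = x ∧ ∀ t ∈ Set.Ioo 0 τ, φ t x ≠ x}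
      ∪ {1}))
    (ψ : ℝ → M → M)
    (hψcont : Continuous fun p : ℝ × M => ψ p.1 p.2)
    (hψ0 : ∀ x, ψ 0 x = x)
    (hψadd : ∀ t s x, ψ (t + s) x = ψ t (ψ s x))
    (hcomm : ∀ s t : ℝ, ∀ x : M, ψ s (φ t x) = φ t (ψ s x)) :
    ∃ a > 0, ∃ μ ∈ Set.Ioo 0 (ε₀ / 3), ∃ z : ℝ → M → ℝ,
      ContinuousOn (fun p : ℝ × M => z p.1 p.2) (Set.Icc (-a) a ×ˢ Set.univ) ∧
      ∀ s ∈ Set.Icc (-a) a, ∀ x : M,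
        z s x ∈ Set.Icc (-μ) μ ∧ ψ s x = φ (z s x) x := by
  classical
  rcases isEmpty_or_nonempty M with hM | hM
  · -- trivial case: M empty
    have hset : {τ : ℝ | 0 < τ ∧ ∃ x : M, φ τ x = x ∧ ∀ t ∈ Set.Ioo 0 τ, φ t x ≠ x} = ∅ := by
      ext τ
      simp only [Set.mem_setOf_eq, Set.mem_empty_iff_false, iff_false, not_and]
      rintro - ⟨x, -⟩
      exact hM.elim x
    have hε : ε₀ = 1 := by rw [hε₀, hset, Set.empty_union, csInf_singleton]
    refine ⟨1, one_pos, 1/6, by rw [hε]; norm_num, fun _ _ => 0,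
      continuous_const.continuousOn, fun s hs x => ?_⟩
    exact hM.elim x
  obtain ⟨x₀⟩ := hM
  set S : Set ℝ := ({τ : ℝ | 0 < τ ∧ ∃ x : M, φ τ x = x ∧ ∀ t ∈ Set.Ioo 0 τ, φ t x ≠ x}
      ∪ {1}) with hS
  -- basic continuity facts
  have hφc1 : ∀ x : M, Continuous fun t : ℝ => φ t x := fun x =>
    hφcont.comp (continuous_id.prodMk continuous_const)
  have hφcM : ∀ t : ℝ, Continuous fun y : M => φ t y := fun t =>
    hφcont.comp (continuous_const.prodMk continuous_id)
  have hφinv : ∀ (t : ℝ) (x : M), φ (-t) (φ t x) = x := by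
    intro t x
    rw [← hφadd]
    simp [hφ0]
  have hψinv : ∀ (s : ℝ) (x : M), ψ (-s) (ψ s x) = x := by
    intro s x
    rw [← hψadd]
    simp [hψ0]
  -- integer multiples of periods are periods
  have hper_nat : ∀ (x : M) (τ : ℝ), φ τ x = x → ∀ n : ℕ, φ (n * τ) x = x := by
    intro x τ h n
    induction n with
    | zero => simpa using hφ0 x
    | succ k ih =>
      have hcast : ((k + 1 : ℕ) : ℝ) * τ = τ + (k : ℝ) * τ := by push_cast; ring
      rw [hcast, hφadd, ih, h]
  have hper_int : ∀ (x : M) (τ : ℝ), φ τ x = x → ∀ n : ℤ, φ (n * τ) x = x := by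
    intro x τ h n
    obtain ⟨m, rfl | rfl⟩ := n.eq_nat_or_neg
    · exact_mod_cast hper_nat x τ h m
    · have h1 : φ ((m : ℝ) * τ) x = x := hper_nat x τ h m
      have hcast : ((-(m : ℤ) : ℤ) : ℝ) * τ = -((m : ℝ) * τ) := by push_cast; ring
      rw [hcast]
      calc φ (-((m : ℝ) * τ)) x = φ (-((m : ℝ) * τ)) (φ ((m : ℝ) * τ) x) := by rw [h1]
        _ = x := hφinv _ x
  -- positivity of ε₀
  choose tfix htfix using hnofix
  have hρxpos : ∀ x : M, 0 < dist (φ (tfix x) x) x := fun x => dist_pos.mpr (htfix x)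
  set Ux : M → Set M := fun x => {y | dist (φ (tfix x) x) x / 2 < dist (φ (tfix x) y) y}
    with hUx
  have hUopen : ∀ x, IsOpen (Ux x) := fun x =>
    isOpen_lt continuous_const ((hφcM (tfix x)).dist continuous_id)
  have hUcover : (Set.univ : Set M) ⊆ ⋃ x, Ux x := by
    intro y _
    exact Set.mem_iUnion.mpr ⟨y, by
      simp only [hUx, Set.mem_setOf_eq]
      linarith [hρxpos y]⟩
  obtain ⟨I, hI⟩ := isCompact_univ.elim_finite_subcover Ux hUopen hUcover
  have hIne : I.Nonempty := by
    obtain ⟨i, hiI, -⟩ := Set.mem_iUnion₂.mp (hI (Set.mem_univ x₀))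
    exact ⟨i, hiI⟩
  set ρ : ℝ := I.inf' hIne (fun i => dist (φ (tfix i) i) i / 2) with hρ
  have hρpos : 0 < ρ := by
    rw [hρ, Finset.lt_inf'_iff]
    intro i _
    linarith [hρxpos i]
  obtain ⟨c, hcpos, hc⟩ := flow_uniform_small φ hφcont hφ0 hρpos
  -- every period is bigger than c
  have hbigper : ∀ (x : M) (τ : ℝ), 0 < τ → φ τ x = x → c < τ := by
    intro x τ hτ hfix
    by_contra hle
    push_neg at hle
    have hall : ∀ t : ℝ, dist (φ t x) x < ρ := by
      intro t
      set r : ℝ := t - τ * ⌊t / τ⌋ with hr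
      have hττ : τ * (t / τ) = t := by field_simp
      have hr0 : 0 ≤ r := by
        have h1 := Int.floor_le (t / τ)
        have h2 : τ * (⌊t / τ⌋ : ℝ) ≤ τ * (t / τ) :=
          mul_le_mul_of_nonneg_left h1 hτ.le
        rw [hττ] at h2
        rw [hr]
        linarith
      have hrτ : r < τ := by
        have h1 := Int.lt_floor_add_one (t / τ)
        have h2 : τ * (t / τ) < τ * ((⌊t / τ⌋ : ℝ) + 1) := mul_lt_mul_of_pos_left h1 hτ
        rw [hττ] at h2
        rw [hr]
        nlinarith
      have hφt : φ t x = φ r x := by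
        have hteq : t = r + (⌊t / τ⌋ : ℝ) * τ := by rw [hr]; ring
        rw [hteq, hφadd, hper_int x τ hfix ⌊t / τ⌋]
      rw [hφt]
      exact hc x r (by rw [abs_le]; constructor <;> linarith)
    obtain ⟨i, hiI, hxU⟩ := Set.mem_iUnion₂.mp (hI (Set.mem_univ x))
    have h1 : ρ ≤ dist (φ (tfix i) i) i / 2 := Finset.inf'_le _ hiI
    have h2 : dist (φ (tfix i) i) i / 2 < dist (φ (tfix i) x) x := hxU
    have h3 := hall (tfix i)
    linarith
  have hSne : (1 : ℝ) ∈ S := Set.mem_union_right _ rfl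
  have hlb : ∀ τ ∈ S, min c 1 ≤ τ := by
    rintro τ (⟨hτpos, x, hfixτ, -⟩ | hτ1)
    · exact le_trans (min_le_left _ _) (hbigper x τ hτpos hfixτ).le
    · simp only [Set.mem_singleton_iff] at hτ1
      rw [hτ1]
      exact min_le_right _ _
  have hε₀pos : 0 < ε₀ := by
    rw [hε₀]
    exact lt_of_lt_of_le (lt_min hcpos one_pos) (le_csInf ⟨1, hSne⟩ hlb)
  have hε₀le : ∀ τ ∈ S, ε₀ ≤ τ := by
    intro τ hτ
    rw [hε₀]
    exact csInf_le ⟨min c 1, hlb⟩ hτ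
  -- no periods smaller than ε₀
  have hA' : ∀ (x : M) (τ : ℝ), 0 < τ → τ < ε₀ → φ τ x ≠ x := by
    intro x τ hτpos hτε hfixτ
    set Sx : Set ℝ := {t | 0 < t ∧ φ t x = x} with hSx
    have hτSx : τ ∈ Sx := ⟨hτpos, hfixτ⟩
    have hlbSx : ∀ t ∈ Sx, c ≤ t := fun t ht => (hbigper x t ht.1 ht.2).le
    have hbdd : BddBelow Sx := ⟨c, hlbSx⟩
    have hclosed : IsClosed Sx := by
      have heq : Sx = {t : ℝ | c ≤ t} ∩ {t | φ t x = x} := by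
        ext t
        constructor
        · intro ht; exact ⟨hlbSx t ht, ht.2⟩
        · rintro ⟨h1, h2⟩; exact ⟨lt_of_lt_of_le hcpos h1, h2⟩
      rw [heq]
      exact (isClosed_le continuous_const continuous_id).inter
        (isClosed_eq (hφc1 x) continuous_const)
    have hpmem : sInf Sx ∈ Sx := hclosed.csInf_mem ⟨τ, hτSx⟩ hbdd
    have hpmin : ∀ t ∈ Set.Ioo 0 (sInf Sx), φ t x ≠ x := by
      intro t ht hft
      exact absurd ht.2 (not_lt.mpr (csInf_le hbdd ⟨ht.1, hft⟩))
    have hpS : sInf Sx ∈ S := Set.mem_union_left _ ⟨hpmem.1, x, hpmem.2, hpmin⟩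
    have h5 := hε₀le _ hpS
    have hpτ : sInf Sx ≤ τ := csInf_le hbdd hτSx
    linarith
  -- setup: separating constant and smallness of ψ
  obtain ⟨δ, hδpos, hsepf⟩ := hsep
  obtain ⟨a₀, ha₀pos, ha₀⟩ := flow_uniform_small ψ hψcont hψ0 hδpos
  -- the subgroup of pairs (s, τ) with ψ_s x = φ_τ x
  have hGgroup : ∀ x : M, ∃ G : AddSubgroup (ℝ × ℝ),
      ∀ p : ℝ × ℝ, p ∈ G ↔ ψ p.1 x = φ p.2 x := by
    intro x
    refine ⟨{ carrier := {p : ℝ × ℝ | ψ p.1 x = φ p.2 x},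
              zero_mem' := by simp [hψ0, hφ0],
              add_mem' := ?_,
              neg_mem' := ?_ }, fun p => Iff.rfl⟩
    · rintro a b (ha : ψ a.1 x = φ a.2 x) (hb : ψ b.1 x = φ b.2 x)
      show ψ ((a + b).1) x = φ ((a + b).2) x
      simp only [Prod.fst_add, Prod.snd_add]
      calc ψ (a.1 + b.1) x = ψ a.1 (ψ b.1 x) := hψadd _ _ _
        _ = ψ a.1 (φ b.2 x) := by rw [hb]
        _ = φ b.2 (ψ a.1 x) := hcomm _ _ _
        _ = φ b.2 (φ a.2 x) := by rw [ha]
        _ = φ (b.2 + a.2) x := (hφadd _ _ _).symm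
        _ = φ (a.2 + b.2) x := by rw [add_comm]
    · rintro a (ha : ψ a.1 x = φ a.2 x)
      show ψ ((-a).1) x = φ ((-a).2) x
      simp only [Prod.fst_neg, Prod.snd_neg]
      have h2 : ψ (-a.1) (φ a.2 x) = x := by rw [← ha]; exact hψinv a.1 x
      have h3 : φ a.2 (ψ (-a.1) x) = x := by rw [← hcomm]; exact h2
      calc ψ (-a.1) x = φ (-a.2) (φ a.2 (ψ (-a.1) x)) := (hφinv a.2 _).symm
        _ = φ (-a.2) x := by rw [h3]
  choose G hGmem using hGgroup
  -- surjectivity onto the first coordinate, first for small s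
  have hGsurj0 : ∀ (x : M) (s : ℝ), |s| ≤ a₀ → ∃ τ, ψ s x = φ τ x := by
    intro x s hs
    have hd : ∀ t : ℝ, dist (φ t x) (φ t (ψ s x)) < δ := by
      intro t
      rw [← hcomm, dist_comm]
      exact ha₀ (φ t x) s hs
    obtain ⟨τ, hτ⟩ := hsepf x (ψ s x) hd
    exact ⟨τ, hτ.symm⟩
  have hGsurj : ∀ (x : M) (s : ℝ), ∃ τ, ψ s x = φ τ x := by
    intro x s
    obtain ⟨n, hn⟩ := exists_nat_ge (|s| / a₀)
    have hn1 : |s / (n + 1)| ≤ a₀ := by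
      rw [abs_div, div_le_iff₀ (by positivity : (0:ℝ) < |(n:ℝ) + 1|)]
      have habs : |((n : ℝ) + 1)| = (n : ℝ) + 1 := abs_of_pos (by positivity)
      rw [habs]
      have h6 : |s| ≤ (n : ℝ) * a₀ := (div_le_iff₀ ha₀pos).mp hn
      nlinarith [ha₀pos.le]
    obtain ⟨τ, hτ⟩ := hGsurj0 x (s / (n + 1)) hn1
    have hiter : ∀ k : ℕ, ψ ((k : ℝ) * (s / (n + 1))) x = φ ((k : ℝ) * τ) x := by
      intro k
      induction k with
      | zero => simp [hψ0, hφ0]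
      | succ m ih =>
        push_cast
        rw [add_mul, add_mul, one_mul, one_mul]
        calc ψ ((m : ℝ) * (s / (n + 1)) + s / (n + 1)) x
            = ψ ((m : ℝ) * (s / (n + 1))) (ψ (s / (n + 1)) x) := hψadd _ _ _
          _ = ψ ((m : ℝ) * (s / (n + 1))) (φ τ x) := by rw [hτ]
          _ = φ τ (ψ ((m : ℝ) * (s / (n + 1))) x) := hcomm _ _ _
          _ = φ τ (φ ((m : ℝ) * τ) x) := by rw [ih]
          _ = φ (τ + (m : ℝ) * τ) x := (hφadd _ _ _).symm
          _ = φ ((m : ℝ) * τ + τ) x := by rw [add_comm]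
    have hk := hiter (n + 1)
    have hns : ((n + 1 : ℕ) : ℝ) * (s / (n + 1)) = s := by
      push_cast
      field_simp
    rw [hns] at hk
    exact ⟨((n + 1 : ℕ) : ℝ) * τ, hk⟩
  -- existence of the linear cocycle
  have hαex : ∀ x : M, ∃ α : ℝ, ∀ s : ℝ, ψ s x = φ (α * s) x := by
    intro x
    have hclosed : IsClosed ((G x : Set (ℝ × ℝ))) := by
      have heq : (G x : Set (ℝ × ℝ)) = {p : ℝ × ℝ | ψ p.1 x = φ p.2 x} :=
        Set.ext (hGmem x)
      rw [heq]
      exact isClosed_eq (hψcont.comp (continuous_fst.prodMk continuous_const))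
        (hφcont.comp (continuous_snd.prodMk continuous_const))
    obtain ⟨v, hvne, hv⟩ := line_in_closed_subgroup (G x) hclosed
      (fun s => (hGsurj x s).imp fun τ hτ => (hGmem x _).mpr hτ)
    by_cases hv1 : v.1 = 0
    · exfalso
      have hv2 : v.2 ≠ 0 := fun h => hvne (Prod.ext hv1 h)
      set t0 := tfix x with ht0def
      have ht0 := htfix x
      have hmem := (hGmem x _).mp (hv (t0 / v.2))
      simp only [Prod.smul_fst, Prod.smul_snd, smul_eq_mul, hv1, mul_zero] at hmem
      rw [div_mul_cancel₀ t0 hv2, hψ0] at hmem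
      exact ht0 hmem.symm
    · refine ⟨v.2 / v.1, fun s => ?_⟩
      have hmem := (hGmem x _).mp (hv (s / v.1))
      simp only [Prod.smul_fst, Prod.smul_snd, smul_eq_mul] at hmem
      rw [div_mul_cancel₀ s hv1] at hmem
      have harg : v.2 / v.1 * s = s / v.1 * v.2 := by
        rw [div_mul_eq_mul_div, div_mul_eq_mul_div, mul_comm]
      rw [harg]
      exact hmem
  choose α hα using hαex
  -- uniqueness of the cocycle
  have hαuniq : ∀ (x : M) (β : ℝ), (∀ s, ψ s x = φ (β * s) x) → β = α x := by
    intro x β hβ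
    by_contra hne
    apply htfix x
    set s := tfix x / (β - α x) with hs
    have h1 : φ (β * s) x = φ (α x * s) x := by rw [← hβ s, ← hα x s]
    have h3 := congrArg (φ (-(α x * s))) h1
    rw [← hφadd, ← hφadd, neg_add_cancel, hφ0] at h3
    have h4 : -(α x * s) + β * s = s * (β - α x) := by ring
    rw [h4, hs, div_mul_cancel₀ (tfix x) (sub_ne_zero.mpr hne)] at h3
    exact h3
  -- the cocycle is bounded
  set μ : ℝ := ε₀ / 6 with hμ
  have hμpos : 0 < μ := by rw [hμ]; linarith
  have hμlt : μ < ε₀ := by rw [hμ]; linarith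
  have hbound : ∃ C : ℝ, 0 ≤ C ∧ ∀ x, |α x| ≤ C := by
    by_contra hnb
    push_neg at hnb
    have h5 : ∀ n : ℕ, ∃ x : M, (n : ℝ) < |α x| := fun n => hnb n (Nat.cast_nonneg n)
    choose xs hxs using h5
    have hαne : ∀ n : ℕ, α (xs (n + 1)) ≠ 0 := by
      intro n
      have := hxs (n + 1)
      intro h
      rw [h] at this
      simp at this
      linarith [this]
    set ss : ℕ → ℝ := fun n => μ / α (xs (n + 1)) with hss
    have hψφ : ∀ n : ℕ, ψ (ss n) (xs (n + 1)) = φ μ (xs (n + 1)) := by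
      intro n
      rw [hα (xs (n + 1)) (ss n)]
      congr 1
      rw [hss, ← mul_div_assoc, mul_div_cancel_left₀ _ (hαne n)]
    have hsbound : ∀ n : ℕ, |ss n| ≤ μ / (n + 1) := by
      intro n
      rw [hss, abs_div, abs_of_pos hμpos]
      apply div_le_div_of_nonneg_left hμpos.le (by positivity)
      have := hxs (n + 1)
      push_cast at this
      linarith
    have hstend : Filter.Tendsto ss Filter.atTop (𝓝 0) := by
      apply squeeze_zero_norm (fun n => by simpa [Real.norm_eq_abs] using hsbound n)
      have h7 : Filter.Tendsto (fun n : ℕ => μ * (1 / ((n : ℝ) + 1))) Filter.atTop (𝓝 (μ * 0)) :=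
        tendsto_const_nhds.mul tendsto_one_div_add_atTop_nhds_zero_nat
      simpa [mul_one_div, div_eq_mul_inv] using h7
    obtain ⟨x, -, σ, hσmono, hxt⟩ :=
      isCompact_univ.tendsto_subseq (fun n => Set.mem_univ (xs (n + 1)))
    have hst : Filter.Tendsto (fun n => (ss (σ n), xs (σ n + 1))) Filter.atTop (𝓝 (0, x)) :=
      (hstend.comp hσmono.tendsto_atTop).prodMk_nhds hxt
    have h6 : Filter.Tendsto (fun n => ψ (ss (σ n)) (xs (σ n + 1))) Filter.atTop (𝓝 (ψ 0 x)) :=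
      (hψcont.tendsto (0, x)).comp hst
    have h7 : Filter.Tendsto (fun n => φ μ (xs (σ n + 1))) Filter.atTop (𝓝 (φ μ x)) :=
      ((hφcM μ).tendsto x).comp hxt
    have h8 := tendsto_nhds_unique (h6.congr (fun n => hψφ (σ n))) h7
    rw [hψ0] at h8
    exact hA' x μ hμpos hμlt h8.symm
  obtain ⟨C, hC0, hC⟩ := hbound
  -- continuity of the cocycle
  have hαcont : Continuous α := by
    rw [continuous_iff_seqContinuous]
    intro xs x hxs
    apply tendsto_of_subseq_tendsto
    intro ns hns
    have hmemI : ∀ n, α (xs (ns n)) ∈ Set.Icc (-C) C := by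
      intro n
      have := abs_le.mp (hC (xs (ns n)))
      exact ⟨this.1, this.2⟩
    obtain ⟨β, -, ms, hmsmono, hβt⟩ :=
      (isCompact_Icc (a := -C) (b := C)).tendsto_subseq hmemI
    refine ⟨ms, ?_⟩
    have hxx : Filter.Tendsto (fun n => xs (ns (ms n))) Filter.atTop (𝓝 x) :=
      hxs.comp (hns.comp hmsmono.tendsto_atTop)
    have hβ : ∀ s : ℝ, ψ s x = φ (β * s) x := by
      intro s
      have hL : Filter.Tendsto (fun n => ψ s (xs (ns (ms n)))) Filter.atTop (𝓝 (ψ s x)) :=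
        ((hψcont.comp (continuous_const.prodMk continuous_id)).tendsto x).comp hxx
      have harg : Filter.Tendsto (fun n => (α (xs (ns (ms n))) * s, xs (ns (ms n))))
          Filter.atTop (𝓝 (β * s, x)) :=
        (hβt.mul_const s).prodMk_nhds hxx
      have hR : Filter.Tendsto (fun n => φ (α (xs (ns (ms n))) * s) (xs (ns (ms n))))
          Filter.atTop (𝓝 (φ (β * s) x)) := (hφcont.tendsto _).comp harg
      exact tendsto_nhds_unique (hL.congr (fun n => hα _ s)) hR
    have hβα : β = α x := hαuniq x β hβ
    rw [← hβα]
    exact hβt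
  -- final assembly
  refine ⟨μ / (C + 1), by positivity, μ, ⟨hμpos, by rw [hμ]; linarith⟩,
    fun s x => α x * s, ?_, ?_⟩
  · exact (((hαcont.comp continuous_snd).mul continuous_fst)).continuousOn
  · intro s hs x
    have h1 : |s| ≤ μ / (C + 1) := abs_le.mpr ⟨hs.1, hs.2⟩
    have h2 : |α x * s| ≤ C * (μ / (C + 1)) := by
      rw [abs_mul]
      exact mul_le_mul (hC x) h1 (abs_nonneg s) hC0
    have h3 : C * (μ / (C + 1)) ≤ μ := by
      rw [mul_comm, div_mul_eq_mul_div, div_le_iff₀ (by positivity : (0:ℝ) < C + 1)]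
      nlinarith
    have h4 : |α x * s| ≤ μ := le_trans h2 h3
    have h5 := abs_le.mp h4
    exact ⟨⟨h5.1, h5.2⟩, hα x s⟩
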